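/- Let k be a nonnegative integer and let a, c, d be complex numbers with Re(d) > Re(a) > 0 (and such that no denominator parameter below is a nonpositive integer exceeding -k, so that all terms are defined). Then Σ_{j=0}^{k} [(a/2)_j · ((a+1)/2)_j · (-k)_j · (c)_j] / [(d/2)_j · ((d+1)/2)_j · (-k+a+c+1-d)_j · j!] = [(d-a)_k · (d-c)_k / ((d-a-c)_k · (d)_k)] · Σ_{j=0}^{k} [(-k)_j · (a)_j · (c)_j] / [(k+d)_j · (d-c)_j · j!]. -/

import Mathlib

/-- The Pochhammer symbol (rising factorial) `(a)_l = a(a+1)⋯(a+l-1)`. -/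
noncomputable def poch (a : ℂ) (l : ℕ) : ℂ := ∏ i ∈ Finset.range l, (a + i)

namespace AskeyIsmailAux
open Finset

lemma poch_zero (a : ℂ) : poch a 0 = 1 := by simp [poch]

lemma poch_one (a : ℂ) : poch a 1 = a := by simp [poch]

lemma poch_succ (a : ℂ) (n : ℕ) : poch a (n + 1) = poch a n * (a + n) :=
  Finset.prod_range_succ _ n

lemma poch_succ' (a : ℂ) (n : ℕ) : poch a (n + 1) = a * poch (a + 1) n := by
  unfold poch
  rw [Finset.prod_range_succ']
  simp only [Nat.cast_zero, add_zero]
  rw [mul_comm]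
  congr 1
  refine Finset.prod_congr rfl fun i _ => ?_
  push_cast
  ring

lemma poch_add (a : ℂ) (m n : ℕ) : poch a (m + n) = poch a m * poch (a + m) n := by
  unfold poch
  rw [Finset.prod_range_add]
  congr 1
  refine Finset.prod_congr rfl fun i _ => ?_
  push_cast
  ring

lemma poch_ne_zero_of_le {a : ℂ} {n : ℕ} (h : poch a n ≠ 0) {m : ℕ} (hm : m ≤ n) :
    poch a m ≠ 0 := by
  obtain ⟨t, rfl⟩ := Nat.exists_eq_add_of_le hm
  rw [poch_add] at h
  exact left_ne_zero_of_mul h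

lemma poch_shift_ne_zero {a : ℂ} {n : ℕ} (h : poch a n ≠ 0) {m t : ℕ} (hm : m + t = n) :
    poch (a + m) t ≠ 0 := by
  subst hm
  rw [poch_add] at h
  exact right_ne_zero_of_mul h

lemma poch_half (x : ℂ) (j : ℕ) :
    poch (x / 2) j * poch ((x + 1) / 2) j * 4 ^ j = poch x (2 * j) := by
  induction j with
  | zero => simp [poch]
  | succ j ih =>
    have h2 : 2 * (j + 1) = (2 * j + 1) + 1 := by ring
    rw [h2, poch_succ, poch_succ, poch_succ, poch_succ]
    push_cast
    calc poch (x / 2) j * (x / 2 + ↑j) * (poch ((x + 1) / 2) j * ((x + 1) / 2 + ↑j)) *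
          4 ^ (j + 1)
        = (poch (x / 2) j * poch ((x + 1) / 2) j * 4 ^ j) *
            ((x / 2 + ↑j) * ((x + 1) / 2 + ↑j) * 4) := by ring
      _ = poch x (2 * j) * (x + 2 * ↑j) * (x + (2 * ↑j + 1)) := by rw [ih]; ring

lemma poch_neg_nat {n i : ℕ} (h : i ≤ n) :
    poch (-(n : ℂ)) i = (-1) ^ i * (n.choose i : ℂ) * (i.factorial : ℂ) := by
  induction i with
  | zero => simp [poch]
  | succ i ih =>
    have hi : i ≤ n := Nat.le_of_succ_le h
    rw [poch_succ, ih hi]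
    have hni : (n.choose (i + 1) : ℂ) * (i + 1) = (n.choose i : ℂ) * ((n : ℂ) - i) := by
      have := Nat.choose_succ_right_eq n i
      have hcast : ((n.choose (i + 1) * (i + 1) : ℕ) : ℂ) = ((n.choose i * (n - i) : ℕ) : ℂ) := by
        rw [this]
      push_cast [Nat.cast_sub hi] at hcast
      exact_mod_cast hcast
    rw [Nat.factorial_succ]
    push_cast
    linear_combination ((-1) ^ i * (i.factorial : ℂ)) * hni

lemma vdm_free (n : ℕ) : ∀ b c : ℂ,
    ∑ i ∈ range (n + 1), (-1) ^ i * (n.choose i : ℂ) * poch b i * poch (c + i) (n - i)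
      = poch (c - b) n := by
  induction n with
  | zero => intro b c; simp [poch]
  | succ n ih =>
    intro b c
    calc ∑ i ∈ range (n + 2),
          (-1) ^ i * ((n + 1).choose i : ℂ) * poch b i * poch (c + i) (n + 1 - i)
        = (∑ i ∈ range (n + 1),
            (-1) ^ (i + 1) * ((n + 1).choose (i + 1) : ℂ) * poch b (i + 1) *
              poch (c + ↑(i + 1)) (n + 1 - (i + 1)))
          + (-1) ^ 0 * ((n + 1).choose 0 : ℂ) * poch b 0 * poch (c + (0 : ℕ)) (n + 1 - 0) :=
          Finset.sum_range_succ'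
            (fun i => (-1) ^ i * ((n + 1).choose i : ℂ) * poch b i * poch (c + i) (n + 1 - i))
            (n + 1)
      _ = (∑ i ∈ range (n + 1),
            ((-1) ^ (i + 1) * (n.choose i : ℂ) * poch b (i + 1) * poch (c + ↑(i + 1)) (n - i)
              + (-1) ^ (i + 1) * (n.choose (i + 1) : ℂ) * poch b (i + 1) *
                poch (c + ↑(i + 1)) (n + 1 - (i + 1))))
          + (-1) ^ 0 * (n.choose 0 : ℂ) * poch b 0 * poch (c + (0 : ℕ)) (n + 1 - 0) := by
          congr 1
          · refine Finset.sum_congr rfl fun i _ => ?_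
            rw [Nat.choose_succ_succ, Nat.succ_sub_succ]
            push_cast
            ring
          · simp
      _ = (∑ i ∈ range (n + 1),
            (-1) ^ (i + 1) * (n.choose i : ℂ) * poch b (i + 1) * poch (c + ↑(i + 1)) (n - i))
          + ((∑ i ∈ range (n + 1),
              (-1) ^ (i + 1) * (n.choose (i + 1) : ℂ) * poch b (i + 1) *
                poch (c + ↑(i + 1)) (n + 1 - (i + 1)))
            + (-1) ^ 0 * (n.choose 0 : ℂ) * poch b 0 * poch (c + (0 : ℕ)) (n + 1 - 0)) := by
          rw [Finset.sum_add_distrib, add_assoc]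
      _ = (∑ i ∈ range (n + 1),
            (-1) ^ (i + 1) * (n.choose i : ℂ) * poch b (i + 1) * poch (c + ↑(i + 1)) (n - i))
          + ∑ i ∈ range (n + 2),
              (-1) ^ i * (n.choose i : ℂ) * poch b i * poch (c + i) (n + 1 - i) := by
          congr 1
          exact (Finset.sum_range_succ'
            (fun i => (-1) ^ i * (n.choose i : ℂ) * poch b i * poch (c + i) (n + 1 - i))
            (n + 1)).symm
      _ = (∑ i ∈ range (n + 1),
            (-1) ^ (i + 1) * (n.choose i : ℂ) * poch b (i + 1) * poch (c + ↑(i + 1)) (n - i))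
          + ∑ i ∈ range (n + 1),
              (-1) ^ i * (n.choose i : ℂ) * poch b i * poch (c + i) (n + 1 - i) := by
          rw [Finset.sum_range_succ (n := n + 1), Nat.choose_succ_self]
          simp
      _ = ∑ i ∈ range (n + 1),
            (c - b) * ((-1) ^ i * (n.choose i : ℂ) * poch b i * poch (c + 1 + i) (n - i)) := by
          rw [← Finset.sum_add_distrib]
          refine Finset.sum_congr rfl fun i hi => ?_
          have hi' : i ≤ n := Nat.lt_succ_iff.mp (Finset.mem_range.mp hi)
          have e1 : n + 1 - i = (n - i) + 1 := by omega
          rw [e1, poch_succ' (c + i), poch_succ b i]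
          have e2 : (c : ℂ) + ↑(i + 1) = c + ↑i + 1 := by push_cast; ring
          have e3 : (c : ℂ) + 1 + ↑i = c + ↑i + 1 := by ring
          rw [e2, e3]
          ring
      _ = (c - b) * poch (c + 1 - b) n := by rw [← Finset.mul_sum, ih]
      _ = poch (c - b) (n + 1) := by
          rw [poch_succ']
          congr 1
          ring

lemma ps_step (n j : ℕ) (hj : j ≤ n) (x y z : ℂ) :
    ((n + 1).choose (j + 1) : ℂ) * poch x (j + 1) * poch y (j + 1) *
        poch (z + ↑(j + 1)) (n + 1 - (j + 1)) * poch (z - x - y) (n + 1 - (j + 1))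
      = (z + n) * (z - x - y + n) *
          ((n.choose (j + 1) : ℂ) * poch x (j + 1) * poch y (j + 1) *
            poch (z + ↑(j + 1)) (n - (j + 1)) * poch (z - x - y) (n - (j + 1)))
        + x * y *
          ((n.choose j : ℂ) * poch (x + 1) j * poch (y + 1) j *
            poch (z + 1 + ↑j) (n - j) * poch (z + 1 - (x + 1) - (y + 1)) (n - j)) := by
  have e2 : z + 1 + (j : ℂ) = z + ↑(j + 1) := by push_cast; ring
  have e3 : z + 1 - (x + 1) - (y + 1) = z - x - y - 1 := by ring
  rw [e2, e3]
  rcases Nat.lt_or_ge j n with hjn | hjn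
  · -- j < n : set m with n = j + (m + 1)
    obtain ⟨m, hm⟩ : ∃ m, n = j + (m + 1) := ⟨n - j - 1, by omega⟩
    have i1 : n + 1 - (j + 1) = m + 1 := by omega
    have i2 : n - (j + 1) = m := by omega
    have i3 : n - j = m + 1 := by omega
    rw [i1, i2, i3]
    rw [poch_succ (z + ↑(j + 1)) m, poch_succ (z - x - y) m,
      poch_succ' x j, poch_succ' y j]
    have e4 : z + ↑(j + 1) + (m : ℂ) = z + n := by
      rw [hm]; push_cast; ring
    rw [e4]
    have e5 : poch (z - x - y - 1) (m + 1) = (z - x - y - 1) * poch (z - x - y) m := by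
      rw [poch_succ' (z - x - y - 1) m]
      congr 2
      ring
    rw [e5]
    rw [Nat.choose_succ_succ n j]
    have hcast : (n.choose (j + 1) : ℂ) * (j + 1) = (n.choose j : ℂ) * (m + 1) := by
      have h := Nat.choose_succ_right_eq n j
      have h2 : n - j = m + 1 := by omega
      rw [h2] at h
      exact_mod_cast congrArg (Nat.cast : ℕ → ℂ) h
    have hn : (n : ℂ) = (j : ℂ) + (m : ℂ) + 1 := by rw [hm]; push_cast; ring
    rw [hn]
    push_cast
    linear_combination -(z + (j : ℂ) + (m : ℂ) + 1) * x * poch (x + 1) j * y * poch (y + 1) j *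
      poch (z + ((j : ℂ) + 1)) m * poch (z - x - y) m * hcast
  · -- j = n
    have hjn' : j = n := le_antisymm hj hjn
    subst hjn'
    simp only [Nat.sub_self, Nat.choose_succ_self, Nat.choose_self, Nat.cast_zero,
      Nat.cast_one, Nat.succ_sub_succ]
    rw [poch_succ' x j, poch_succ' y j]
    simp [poch]
    ring

lemma ps_free (n : ℕ) : ∀ x y z : ℂ,
    ∑ j ∈ range (n + 1), (n.choose j : ℂ) * poch x j * poch y j *
        poch (z + j) (n - j) * poch (z - x - y) (n - j)
      = poch (z - x) n * poch (z - y) n := by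
  induction n with
  | zero => intro x y z; simp [poch]
  | succ n ih =>
    intro x y z
    calc ∑ j ∈ range (n + 2), ((n + 1).choose j : ℂ) * poch x j * poch y j *
            poch (z + j) (n + 1 - j) * poch (z - x - y) (n + 1 - j)
        = (∑ j ∈ range (n + 1), ((n + 1).choose (j + 1) : ℂ) * poch x (j + 1) * poch y (j + 1) *
              poch (z + ↑(j + 1)) (n + 1 - (j + 1)) * poch (z - x - y) (n + 1 - (j + 1)))
            + ((n + 1).choose 0 : ℂ) * poch x 0 * poch y 0 *
              poch (z + (0 : ℕ)) (n + 1 - 0) * poch (z - x - y) (n + 1 - 0) :=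
          Finset.sum_range_succ' _ (n + 1)
      _ = (∑ j ∈ range (n + 1),
              ((z + n) * (z - x - y + n) *
                ((n.choose (j + 1) : ℂ) * poch x (j + 1) * poch y (j + 1) *
                  poch (z + ↑(j + 1)) (n - (j + 1)) * poch (z - x - y) (n - (j + 1)))
              + x * y *
                ((n.choose j : ℂ) * poch (x + 1) j * poch (y + 1) j *
                  poch (z + 1 + ↑j) (n - j) * poch (z + 1 - (x + 1) - (y + 1)) (n - j))))
            + (z + n) * (z - x - y + n) *
              ((n.choose 0 : ℂ) * poch x 0 * poch y 0 *
                poch (z + (0 : ℕ)) (n - 0) * poch (z - x - y) (n - 0)) := by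
          congr 1
          · refine Finset.sum_congr rfl fun j hj => ?_
            exact ps_step n j (Nat.lt_succ_iff.mp (Finset.mem_range.mp hj)) x y z
          · simp only [Nat.choose_zero_right, Nat.cast_one, Nat.cast_zero, Nat.sub_zero]
            rw [poch_succ (z + 0) n, poch_succ (z - x - y) n]
            ring
      _ = (z + n) * (z - x - y + n) *
            ((∑ j ∈ range (n + 1),
              (n.choose (j + 1) : ℂ) * poch x (j + 1) * poch y (j + 1) *
                poch (z + ↑(j + 1)) (n - (j + 1)) * poch (z - x - y) (n - (j + 1)))
            + (n.choose 0 : ℂ) * poch x 0 * poch y 0 *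
                poch (z + (0 : ℕ)) (n - 0) * poch (z - x - y) (n - 0))
          + x * y * ∑ j ∈ range (n + 1),
              (n.choose j : ℂ) * poch (x + 1) j * poch (y + 1) j *
                poch (z + 1 + ↑j) (n - j) * poch (z + 1 - (x + 1) - (y + 1)) (n - j) := by
          rw [Finset.sum_add_distrib, ← Finset.mul_sum, ← Finset.mul_sum]
          ring
      _ = (z + n) * (z - x - y + n) *
            (∑ j ∈ range (n + 2), (n.choose j : ℂ) * poch x j * poch y j *
                poch (z + j) (n - j) * poch (z - x - y) (n - j))
          + x * y * ∑ j ∈ range (n + 1),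
              (n.choose j : ℂ) * poch (x + 1) j * poch (y + 1) j *
                poch (z + 1 + ↑j) (n - j) * poch (z + 1 - (x + 1) - (y + 1)) (n - j) := by
          congr 2
          exact (Finset.sum_range_succ' (fun j => (n.choose j : ℂ) * poch x j * poch y j *
            poch (z + ↑j) (n - j) * poch (z - x - y) (n - j)) (n + 1)).symm
      _ = (z + n) * (z - x - y + n) *
            (∑ j ∈ range (n + 1), (n.choose j : ℂ) * poch x j * poch y j *
                poch (z + j) (n - j) * poch (z - x - y) (n - j))
          + x * y * ∑ j ∈ range (n + 1),
              (n.choose j : ℂ) * poch (x + 1) j * poch (y + 1) j *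
                poch (z + 1 + ↑j) (n - j) * poch (z + 1 - (x + 1) - (y + 1)) (n - j) := by
          rw [Finset.sum_range_succ (n := n + 1), Nat.choose_succ_self]
          simp
      _ = (z + n) * (z - x - y + n) * (poch (z - x) n * poch (z - y) n)
          + x * y * (poch (z + 1 - (x + 1)) n * poch (z + 1 - (y + 1)) n) := by
          rw [ih x y z, ih (x + 1) (y + 1) (z + 1)]
      _ = poch (z - x) (n + 1) * poch (z - y) (n + 1) := by
          have e1 : z + 1 - (x + 1) = z - x := by ring
          have e2 : z + 1 - (y + 1) = z - y := by ring
          rw [e1, e2, poch_succ (z - x) n, poch_succ (z - y) n]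
          ring

lemma poch_split (a : ℂ) {i n : ℕ} (h : i ≤ n) :
    poch a n = poch a i * poch (a + i) (n - i) := by
  have e : n = i + (n - i) := by omega
  calc poch a n = poch a (i + (n - i)) := by rw [← e]
    _ = poch a i * poch (a + i) (n - i) := poch_add a i (n - i)

lemma fact_ne (i : ℕ) : (i.factorial : ℂ) ≠ 0 :=
  Nat.cast_ne_zero.mpr (Nat.factorial_ne_zero i)

lemma poch_flip (w : ℂ) (n : ℕ) : ∀ j ≤ n,
    poch (1 - w - n) j * poch w (n - j) = (-1) ^ j * poch w n := by
  intro j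
  induction j with
  | zero => intro _; simp [poch]
  | succ j ihj =>
    intro hj
    have hj' : j ≤ n := by omega
    have ih := ihj hj'
    have i1 : n - j = (n - (j + 1)) + 1 := by omega
    rw [i1, poch_succ] at ih
    rw [poch_succ (1 - w - ↑n) j]
    have hc : ((n - (j + 1) : ℕ) : ℂ) = (n : ℂ) - (j : ℂ) - 1 := by
      rw [Nat.cast_sub (by omega : j + 1 ≤ n)]; push_cast; ring
    have e1 : (1 : ℂ) - w - ↑n + ↑j = -(w + ↑(n - (j + 1))) := by rw [hc]; ring
    rw [e1]
    linear_combination -ih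

lemma vdm_div (n : ℕ) (b c : ℂ) (hc : poch c n ≠ 0) :
    ∑ i ∈ range (n + 1), poch (-(n : ℂ)) i * poch b i / (poch c i * (i.factorial : ℂ))
      = poch (c - b) n / poch c n := by
  rw [← vdm_free n b c, Finset.sum_div]
  refine Finset.sum_congr rfl fun i hi => ?_
  have hin : i ≤ n := Nat.lt_succ_iff.mp (Finset.mem_range.mp hi)
  have hci : poch c i ≠ 0 := poch_ne_zero_of_le hc hin
  have hsplit := poch_split c hin
  rw [poch_neg_nat hin, div_eq_div_iff (mul_ne_zero hci (fact_ne i)) hc, hsplit]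
  ring

lemma ps_div (n : ℕ) (x y z : ℂ) (hz : poch z n ≠ 0)
    (he : poch (1 + x + y - z - n) n ≠ 0) (hw : poch (z - x - y) n ≠ 0) :
    ∑ j ∈ range (n + 1),
        poch (-(n : ℂ)) j * poch x j * poch y j /
          (poch z j * poch (1 + x + y - z - n) j * (j.factorial : ℂ))
      = poch (z - x) n * poch (z - y) n / (poch z n * poch (z - x - y) n) := by
  rw [← ps_free n x y z, Finset.sum_div]
  refine Finset.sum_congr rfl fun j hj => ?_
  have hjn : j ≤ n := Nat.lt_succ_iff.mp (Finset.mem_range.mp hj)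
  have hzj : poch z j ≠ 0 := poch_ne_zero_of_le hz hjn
  have hej : poch (1 + x + y - z - n) j ≠ 0 := poch_ne_zero_of_le he hjn
  have hzsplit := poch_split z hjn
  have earg : (1 : ℂ) + x + y - z - n = 1 - (z - x - y) - n := by ring
  have hflip := poch_flip (z - x - y) n j hjn
  rw [← earg] at hflip
  rw [poch_neg_nat hjn,
    div_eq_div_iff (mul_ne_zero (mul_ne_zero hzj hej) (fact_ne j)) (mul_ne_zero hz hw),
    hzsplit]
  linear_combination (-(n.choose j : ℂ) * (j.factorial : ℂ) * poch x j * poch y j *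
    poch z j * poch (z + j) (n - j)) * hflip

lemma poch_rev (x : ℂ) : ∀ i : ℕ, poch (-x - i + 1) i = (-1) ^ i * poch x i := by
  intro i
  induction i with
  | zero => simp [poch]
  | succ i ih =>
    have e1 : -x - ↑(i + 1) + 1 = -x - ↑i := by push_cast; ring
    rw [e1, poch_succ' (-x - ↑i) i]
    have e2 : -x - ↑i + 1 = -x - ↑i + 1 := rfl
    rw [ih, poch_succ x i]
    ring

noncomputable def Fterm (k : ℕ) (a c d e : ℂ) (j i : ℕ) : ℂ :=
  poch a j * poch (-(k : ℂ)) j * poch c j * poch (d - a) i * poch (-(j : ℂ)) i /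
    (poch d j * poch e j * (j.factorial : ℂ) * poch (d + j) i * (i.factorial : ℂ))

lemma stepDm (k i m : ℕ) (hik : i ≤ k) (a c d e : ℂ)
    (hdim : poch d (i + m) ≠ 0)
    (hdii : poch d (i + i) ≠ 0)
    (hdji : poch (d + ↑(i + m)) i ≠ 0)
    (hdmm : poch (d + ↑i + ↑i) m ≠ 0)
    (hei : poch e i ≠ 0) (heim : poch (e + ↑i) m ≠ 0) :
    Fterm k a c d e (i + m) i
      = (poch a i * poch (-(k : ℂ)) i * poch c i * poch (d - a) i * (-1) ^ i /
          (poch d (i + i) * poch e i * (i.factorial : ℂ))) *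
        (poch (-((k - i : ℕ) : ℂ)) m * poch (a + ↑i) m * poch (c + ↑i) m /
          (poch (d + ↑i + ↑i) m * poch (e + ↑i) m * (m.factorial : ℂ))) := by
  unfold Fterm
  have sa := poch_add a i m
  have sc := poch_add c i m
  have se := poch_add e i m
  have sk : poch (-(k : ℂ)) (i + m) = poch (-(k : ℂ)) i * poch (-((k - i : ℕ) : ℂ)) m := by
    rw [poch_add]
    have : -(k : ℂ) + ↑i = -((k - i : ℕ) : ℂ) := by rw [Nat.cast_sub hik]; ring
    rw [this]
  have sneg : poch (-((i + m : ℕ) : ℂ)) i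
      = (-1) ^ i * ((i + m).choose i : ℂ) * (i.factorial : ℂ) :=
    poch_neg_nat (Nat.le_add_right i m)
  have sfac : (((i + m).factorial : ℕ) : ℂ)
      = ((i + m).choose i : ℂ) * (i.factorial : ℂ) * (m.factorial : ℂ) := by
    have h := Nat.choose_mul_factorial_mul_factorial (Nat.le_add_right i m)
    rw [Nat.add_sub_cancel_left] at h
    exact_mod_cast h.symm
  have h1 : poch d (i + i) * poch (d + ↑i + ↑i) m = poch d (i + m) * poch (d + ↑(i + m)) i := by
    have ha1 : poch d ((i + m) + i) = poch d (i + m) * poch (d + ↑(i + m)) i := poch_add d (i + m) i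
    have h3 : (i + m) + i = (i + i) + m := by omega
    have ha2 : poch d ((i + i) + m) = poch d (i + i) * poch (d + ↑(i + i)) m := poch_add d (i + i) m
    have h4 : d + ↑(i + i) = d + ↑i + ↑i := by push_cast; ring
    rw [h3, ha2, h4] at ha1
    exact ha1
  have hfi : (Nat.factorial i : ℂ) ≠ 0 := Nat.cast_ne_zero.mpr (Nat.factorial_ne_zero i)
  have hfm : (Nat.factorial m : ℂ) ≠ 0 := Nat.cast_ne_zero.mpr (Nat.factorial_ne_zero m)
  have hch : ((i + m).choose i : ℂ) ≠ 0 :=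
    Nat.cast_ne_zero.mpr (Nat.choose_pos (Nat.le_add_right i m)).ne'
  have hD1 : poch d (i + m) * (poch e i * poch (e + ↑i) m) *
      (((i + m).choose i : ℂ) * (i.factorial : ℂ) * (m.factorial : ℂ)) *
      poch (d + ↑(i + m)) i * (i.factorial : ℂ) ≠ 0 :=
    mul_ne_zero (mul_ne_zero (mul_ne_zero (mul_ne_zero hdim
      (mul_ne_zero hei heim)) (mul_ne_zero (mul_ne_zero hch hfi) hfm)) hdji) hfi
  have hD2 : poch d (i + i) * poch e i * (i.factorial : ℂ) *
      (poch (d + ↑i + ↑i) m * poch (e + ↑i) m * (m.factorial : ℂ)) ≠ 0 :=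
    mul_ne_zero (mul_ne_zero (mul_ne_zero hdii hei) hfi)
      (mul_ne_zero (mul_ne_zero hdmm heim) hfm)
  rw [sa, sk, sc, se, sneg, sfac, div_mul_div_comm, div_eq_div_iff hD1 hD2]
  linear_combination (poch a i * poch (a + ↑i) m * poch (-(k : ℂ)) i * poch (-((k - i : ℕ) : ℂ)) m *
    poch c i * poch (c + ↑i) m * poch (d - a) i * (-1) ^ i * ((i + m).choose i : ℂ) *
    (i.factorial : ℂ) * (i.factorial : ℂ) * (m.factorial : ℂ) * poch e i * poch (e + ↑i) m) * h1

lemma stepA (k j : ℕ) (a c d e : ℂ)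
    (hdj : poch d j ≠ 0) (hdjj : poch (d + ↑j) j ≠ 0) (hej : poch e j ≠ 0) :
    poch (a / 2) j * poch ((a + 1) / 2) j * poch (-(k : ℂ)) j * poch c j /
        (poch (d / 2) j * poch ((d + 1) / 2) j * poch e j * (j.factorial : ℂ))
      = ∑ i ∈ Finset.range (j + 1), Fterm k a c d e j i := by
  have h4j : ((4 : ℂ)) ^ j ≠ 0 := pow_ne_zero _ (by norm_num)
  have hna : poch (a / 2) j * poch ((a + 1) / 2) j = poch a j * poch (a + ↑j) j / 4 ^ j := by
    rw [eq_div_iff h4j]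
    have h := poch_half a j
    rwa [two_mul, poch_add] at h
  have hnd : poch (d / 2) j * poch ((d + 1) / 2) j = poch d j * poch (d + ↑j) j / 4 ^ j := by
    rw [eq_div_iff h4j]
    have h := poch_half d j
    rwa [two_mul, poch_add] at h
  have hv := vdm_div j (d - a) (d + ↑j) hdjj
  have harg : d + ↑j - (d - a) = a + ↑j := by ring
  rw [harg] at hv
  have hfj : (j.factorial : ℂ) ≠ 0 := fact_ne j
  calc poch (a / 2) j * poch ((a + 1) / 2) j * poch (-(k : ℂ)) j * poch c j /
        (poch (d / 2) j * poch ((d + 1) / 2) j * poch e j * (j.factorial : ℂ))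
      = (poch a j * poch (-(k : ℂ)) j * poch c j / (poch d j * poch e j * (j.factorial : ℂ))) *
          (poch (a + ↑j) j / poch (d + ↑j) j) := by
        rw [hna, hnd]
        field_simp
    _ = (poch a j * poch (-(k : ℂ)) j * poch c j / (poch d j * poch e j * (j.factorial : ℂ))) *
          ∑ i ∈ Finset.range (j + 1), poch (-(j : ℂ)) i * poch (d - a) i /
            (poch (d + ↑j) i * (i.factorial : ℂ)) := by rw [hv]
    _ = ∑ i ∈ Finset.range (j + 1), Fterm k a c d e j i := by
        rw [Finset.mul_sum]
        refine Finset.sum_congr rfl fun i hi => ?_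
        unfold Fterm
        rw [div_mul_div_comm]
        ring

set_option maxHeartbeats 2000000 in
lemma stepD (k i : ℕ) (hik : i ≤ k) (a c d : ℂ)
    (hdd : poch d (k + k) ≠ 0)
    (hek : poch (-(k : ℂ) + a + c + 1 - d) k ≠ 0)
    (h4 : poch ((k : ℂ) + d) k ≠ 0)
    (h5 : poch (d - c) k ≠ 0)
    (h6 : poch (d - a - c) k ≠ 0)
    (h7 : poch d k ≠ 0) :
    ∑ m ∈ Finset.range (k - i + 1), Fterm k a c d (-(k : ℂ) + a + c + 1 - d) (i + m) i
      = (poch (d - a) k * poch (d - c) k / (poch (d - a - c) k * poch d k)) *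
        (poch (-(k : ℂ)) i * poch a i * poch c i /
          (poch ((k : ℂ) + d) i * poch (d - c) i * (i.factorial : ℂ))) := by
  set e : ℂ := -(k : ℂ) + a + c + 1 - d with he
  have hei : poch e i ≠ 0 := poch_ne_zero_of_le hek hik
  have heimN : ∀ m, m ≤ k - i → poch (e + ↑i) m ≠ 0 := by
    intro m hm
    have h1 : poch e (i + m) ≠ 0 := poch_ne_zero_of_le hek (by omega)
    rw [poch_add] at h1; exact right_ne_zero_of_mul h1
  have hdii : poch d (i + i) ≠ 0 := poch_ne_zero_of_le hdd (by omega)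
  have hdimN : ∀ m, m ≤ k - i → poch d (i + m) ≠ 0 := fun m hm =>
    poch_ne_zero_of_le hdd (by omega)
  have hdjiN : ∀ m, m ≤ k - i → poch (d + ↑(i + m)) i ≠ 0 := by
    intro m hm
    have h1 : poch d ((i + m) + i) ≠ 0 := poch_ne_zero_of_le hdd (by omega)
    rw [poch_add] at h1; exact right_ne_zero_of_mul h1
  have hdmmN : ∀ m, m ≤ k - i → poch (d + ↑i + ↑i) m ≠ 0 := by
    intro m hm
    have h1 : poch d ((i + i) + m) ≠ 0 := poch_ne_zero_of_le hdd (by omega)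
    rw [poch_add, show d + ((i + i : ℕ) : ℂ) = d + ↑i + ↑i from by push_cast; ring] at h1
    exact right_ne_zero_of_mul h1
  have hterm : ∀ m ∈ Finset.range (k - i + 1),
      Fterm k a c d e (i + m) i
        = (poch a i * poch (-(k : ℂ)) i * poch c i * poch (d - a) i * (-1) ^ i /
            (poch d (i + i) * poch e i * (i.factorial : ℂ))) *
          (poch (-((k - i : ℕ) : ℂ)) m * poch (a + ↑i) m * poch (c + ↑i) m /
            (poch (d + ↑i + ↑i) m * poch (e + ↑i) m * (m.factorial : ℂ))) := by
    intro m hm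
    have hm' : m ≤ k - i := Nat.lt_succ_iff.mp (Finset.mem_range.mp hm)
    exact stepDm k i m hik a c d e (hdimN m hm') hdii (hdjiN m hm') (hdmmN m hm') hei
      (heimN m hm')
  rw [Finset.sum_congr rfl hterm, ← Finset.mul_sum]
  have hz : poch (d + ↑i + ↑i) (k - i) ≠ 0 := hdmmN (k - i) le_rfl
  have hwarg : d + ↑i + ↑i - (a + ↑i) - (c + ↑i) = d - a - c := by ring
  have hw : poch (d - a - c) (k - i) ≠ 0 := poch_ne_zero_of_le h6 (Nat.sub_le k i)
  have hearg : 1 + (a + ↑i) + (c + ↑i) - (d + ↑i + ↑i) - ((k - i : ℕ) : ℂ) = e + ↑i := by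
    rw [Nat.cast_sub hik, he]; ring
  have heki : poch (e + ↑i) (k - i) ≠ 0 := heimN (k - i) le_rfl
  have hps := ps_div (k - i) (a + ↑i) (c + ↑i) (d + ↑i + ↑i) hz
    (by rw [hearg]; exact heki) (by rw [hwarg]; exact hw)
  rw [hearg, hwarg] at hps
  rw [show d + ↑i + ↑i - (a + ↑i) = d - a + ↑i from by ring,
    show d + ↑i + ↑i - (c + ↑i) = d - c + ↑i from by ring] at hps
  rw [hps]
  -- final algebra
  have p1 : poch (d - a) k = poch (d - a) i * poch (d - a + ↑i) (k - i) := poch_split (d - a) hik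
  have p2 : poch (d - c) k = poch (d - c) i * poch (d - c + ↑i) (k - i) := poch_split (d - c) hik
  have p3 : poch (d - a - c) k
      = poch (d - a - c) (k - i) * poch (d - a - c + ↑(k - i)) i := by
    have h := poch_split (d - a - c) (Nat.sub_le k i)
    rwa [show k - (k - i) = i from by omega] at h
  have p4 : poch (d - a - c + ↑(k - i)) i = (-1) ^ i * poch e i := by
    have h := poch_rev e i
    rwa [show -e - ↑i + 1 = d - a - c + ↑(k - i) from by
      rw [Nat.cast_sub hik, he]; ring] at h
  have hkdi : poch ((k : ℂ) + d) i ≠ 0 := poch_ne_zero_of_le h4 hik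
  have p5' : poch d k = poch d (i + i) * poch (d + ↑i + ↑i) (k - i) / poch ((k : ℂ) + d) i := by
    rw [eq_div_iff hkdi]
    have q1 := poch_add d k i
    rw [show d + (k : ℂ) = (k : ℂ) + d from by ring] at q1
    have q2 := poch_add d (i + i) (k - i)
    rw [show (i + i) + (k - i) = k + i from by omega,
      show d + ((i + i : ℕ) : ℂ) = d + ↑i + ↑i from by push_cast; ring] at q2
    linear_combination q2 - q1
  rw [p1, p2, p3, p4, p5']
  have hdci : poch (d - c) i ≠ 0 := poch_ne_zero_of_le h5 hik
  have hfi : (i.factorial : ℂ) ≠ 0 := fact_ne i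
  have hs : ((-1 : ℂ)) ^ i ≠ 0 := pow_ne_zero _ (by norm_num)
  field_simp
  rw [show (((-1:ℂ))^i)^2 = 1 from by rw [← pow_mul, mul_comm, pow_mul]; norm_num]
  ring

lemma swap_sum (k : ℕ) (f : ℕ → ℕ → ℂ) :
    ∑ j ∈ range (k + 1), ∑ i ∈ range (j + 1), f j i
      = ∑ i ∈ range (k + 1), ∑ m ∈ range (k - i + 1), f (i + m) i := by
  have h1 : ∀ j ∈ range (k + 1),
      ∑ i ∈ range (j + 1), f j i = ∑ i ∈ range (k + 1), if i ≤ j then f j i else 0 := by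
    intro j hj
    have hjk : j + 1 ≤ k + 1 := by have := Finset.mem_range.mp hj; omega
    rw [← Finset.sum_subset (Finset.range_subset_range.mpr hjk)
      (fun x _ hnx => if_neg (by simp at hnx; omega))]
    exact Finset.sum_congr rfl fun i hi =>
      (if_pos (Nat.lt_succ_iff.mp (Finset.mem_range.mp hi))).symm
  rw [Finset.sum_congr rfl h1, Finset.sum_comm]
  refine Finset.sum_congr rfl fun i hi => ?_
  rw [← Finset.sum_filter]
  have hfil : (range (k + 1)).filter (fun j => i ≤ j) = Finset.Ico i (k + 1) := by
    ext x
    simp only [Finset.mem_filter, Finset.mem_range, Finset.mem_Ico]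
    omega
  rw [hfil, Finset.sum_Ico_eq_sum_range, show k + 1 - i = k - i + 1 from by
    have := Finset.mem_range.mp hi; omega]

end AskeyIsmailAux

open AskeyIsmailAux Finset in
/-- The Askey–Ismail `₄F₃` transformation: a terminating `₄F₃` at `1` equals a Pochhammer ratio
times a terminating `₃F₂` at `1`, for `Re d > Re a > 0`. -/
theorem askey_ismail_transformation (k : ℕ) (a c d : ℂ)
    (hda : a.re < d.re) (ha : 0 < a.re)
    (h1 : poch (d / 2) k ≠ 0)
    (h2 : poch ((d + 1) / 2) k ≠ 0)
    (h3 : poch (-(k : ℂ) + a + c + 1 - d) k ≠ 0)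
    (h4 : poch ((k : ℂ) + d) k ≠ 0)
    (h5 : poch (d - c) k ≠ 0)
    (h6 : poch (d - a - c) k ≠ 0)
    (h7 : poch d k ≠ 0) :
    ∑ j ∈ Finset.range (k + 1),
        poch (a / 2) j * poch ((a + 1) / 2) j * poch (-(k : ℂ)) j * poch c j /
          (poch (d / 2) j * poch ((d + 1) / 2) j * poch (-(k : ℂ) + a + c + 1 - d) j *
            (Nat.factorial j : ℂ)) =
      (poch (d - a) k * poch (d - c) k / (poch (d - a - c) k * poch d k)) *
        ∑ j ∈ Finset.range (k + 1),
          poch (-(k : ℂ)) j * poch a j * poch c j /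
            (poch ((k : ℂ) + d) j * poch (d - c) j * (Nat.factorial j : ℂ)) := by
  have hdd : poch d (k + k) ≠ 0 := by
    rw [poch_add]
    exact mul_ne_zero h7 (by rwa [show d + (k : ℂ) = (k : ℂ) + d from by ring])
  have hA : ∀ j ∈ Finset.range (k + 1),
      poch (a / 2) j * poch ((a + 1) / 2) j * poch (-(k : ℂ)) j * poch c j /
          (poch (d / 2) j * poch ((d + 1) / 2) j * poch (-(k : ℂ) + a + c + 1 - d) j *
            (Nat.factorial j : ℂ))
        = ∑ i ∈ Finset.range (j + 1), Fterm k a c d (-(k : ℂ) + a + c + 1 - d) j i := by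
    intro j hj
    have hjk : j ≤ k := Nat.lt_succ_iff.mp (Finset.mem_range.mp hj)
    have hdj : poch d j ≠ 0 := poch_ne_zero_of_le hdd (by omega)
    have hdjj : poch (d + ↑j) j ≠ 0 := by
      have h' : poch d (j + j) ≠ 0 := poch_ne_zero_of_le hdd (by omega)
      rw [poch_add] at h'
      exact right_ne_zero_of_mul h'
    exact stepA k j a c d _ hdj hdjj (poch_ne_zero_of_le h3 hjk)
  rw [Finset.sum_congr rfl hA, swap_sum k (Fterm k a c d (-(k : ℂ) + a + c + 1 - d)),
    Finset.mul_sum]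
  refine Finset.sum_congr rfl fun i hi => ?_
  exact stepD k i (Nat.lt_succ_iff.mp (Finset.mem_range.mp hi)) a c d hdd h3 h4 h5 h6 h7
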